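/- Let U and V be real-valued random variables on a probability space (Ω, 𝓕, P), let μ denote the joint law of (U,V) on ℝ × ℝ and μ₁, μ₂ the laws of U and V respectively, and assume μ is absolutely continuous with respect to the product measure μ₁ ⊗ μ₂ with square-integrable Radon–Nikodym derivative. Then for all measurable functions f, g : ℝ → ℝ with E[f(U)] = E[g(V)] = 0 and E[f(U)²] = E[g(V)²] = 1, one has (E[f(U) g(V)])² ≤ χ²(μ, μ₁ ⊗ μ₂). In particular HGR(U,V)² ≤ χ²(P_{U,V}, P_U ⊗ P_V). -/
import Mathlib


open MeasureTheory

/-- The Hirschfeld–Gebelein–Rényi maximal correlation of two real random variables: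
`HGR(U,V) = sup E[f(U) g(V)]`, the supremum over measurable `f, g : ℝ → ℝ` with
`E[f(U)] = E[g(V)] = 0` and `E[f(U)²] = E[g(V)²] = 1`. -/
noncomputable def hgr {Ω : Type*} [MeasurableSpace Ω] (P : Measure Ω) (U V : Ω → ℝ) : ℝ :=
  sSup { c : ℝ | ∃ f g : ℝ → ℝ, Measurable f ∧ Measurable g ∧
    (∫ ω, f (U ω) ∂P) = 0 ∧ (∫ ω, g (V ω) ∂P) = 0 ∧
    (∫ ω, (f (U ω)) ^ 2 ∂P) = 1 ∧ (∫ ω, (g (V ω)) ^ 2 ∂P) = 1 ∧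
    c = ∫ ω, f (U ω) * g (V ω) ∂P }


lemma myCS {α : Type*} [MeasurableSpace α] {μ : Measure α} {f g : α → ℝ}
    (hf : Integrable (fun x => f x ^ 2) μ) (hg : Integrable (fun x => g x ^ 2) μ)
    (hfg : Integrable (fun x => f x * g x) μ) :
    (∫ x, f x * g x ∂μ) ^ 2 ≤ (∫ x, f x ^ 2 ∂μ) * (∫ x, g x ^ 2 ∂μ) := by
  have key : ∀ t : ℝ, 0 ≤ (∫ x, f x ^ 2 ∂μ) * (t * t)
      + (2 * ∫ x, f x * g x ∂μ) * t + ∫ x, g x ^ 2 ∂μ := by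
    intro t
    have h0 : 0 ≤ ∫ x, (t * f x + g x) ^ 2 ∂μ := integral_nonneg fun x => sq_nonneg _
    have hexp : ∫ x, (t * f x + g x) ^ 2 ∂μ
        = (∫ x, f x ^ 2 ∂μ) * (t * t) + (2 * ∫ x, f x * g x ∂μ) * t + ∫ x, g x ^ 2 ∂μ := by
      have h1 : (fun x => (t * f x + g x) ^ 2)
          = fun x => (t * t) * f x ^ 2 + (2 * t) * (f x * g x) + g x ^ 2 := by
        funext x; ring
      have hA : Integrable (fun x => (t * t) * f x ^ 2 + (2 * t) * (f x * g x)) μ :=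
        (hf.const_mul _).add (hfg.const_mul _)
      rw [h1, integral_add hA hg, integral_add (hf.const_mul (t * t)) (hfg.const_mul (2 * t)),
        integral_const_mul, integral_const_mul]
      ring
    linarith [hexp ▸ h0]
  have hd := discrim_le_zero key
  rw [discrim] at hd
  nlinarith [hd]

lemma myL2mul {α : Type*} [MeasurableSpace α] {μ : Measure α} {f g : α → ℝ}
    (hfm : AEStronglyMeasurable f μ) (hgm : AEStronglyMeasurable g μ)
    (hf : Integrable (fun x => f x ^ 2) μ) (hg : Integrable (fun x => g x ^ 2) μ) :
    Integrable (fun x => f x * g x) μ := by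
  refine Integrable.mono' ((hf.add hg).div_const 2) (hfm.mul hgm) ?_
  filter_upwards with x
  have : ‖f x * g x‖ = |f x| * |g x| := by rw [norm_mul]; rfl
  rw [this]
  simp only [Pi.add_apply]
  nlinarith [sq_nonneg (|f x| - |g x|), sq_abs (f x), sq_abs (g x)]


lemma key_ineq {Ω : Type*} [MeasurableSpace Ω]
    (P : Measure Ω) [IsProbabilityMeasure P]
    (U V : Ω → ℝ) (hU : Measurable U) (hV : Measurable V)
    (hac : Measure.map (fun ω => (U ω, V ω)) P ≪
      (Measure.map U P).prod (Measure.map V P))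
    (hr2 : Integrable
      (fun p => (((Measure.map (fun ω => (U ω, V ω)) P).rnDeriv
        ((Measure.map U P).prod (Measure.map V P)) p).toReal) ^ 2)
      ((Measure.map U P).prod (Measure.map V P)))
    (f g : ℝ → ℝ) (hf : Measurable f) (hg : Measurable g)
    (hf0 : (∫ ω, f (U ω) ∂P) = 0) (hg0 : (∫ ω, g (V ω) ∂P) = 0)
    (hf1 : (∫ ω, (f (U ω)) ^ 2 ∂P) = 1) (hg1 : (∫ ω, (g (V ω)) ^ 2 ∂P) = 1) :
    (∫ ω, f (U ω) * g (V ω) ∂P) ^ 2 ≤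
      (∫ p, (((Measure.map (fun ω => (U ω, V ω)) P).rnDeriv
        ((Measure.map U P).prod (Measure.map V P)) p).toReal) ^ 2
        ∂((Measure.map U P).prod (Measure.map V P))) - 1 := by
  set μ := Measure.map (fun ω => (U ω, V ω)) P with hμdef
  set μ₁ := Measure.map U P with hμ₁def
  set μ₂ := Measure.map V P with hμ₂def
  set ν := μ₁.prod μ₂ with hνdef
  set r : ℝ × ℝ → ℝ := fun p => (μ.rnDeriv ν p).toReal with hrdef
  have hUV : Measurable fun ω => (U ω, V ω) := hU.prodMk hV
  haveI : IsProbabilityMeasure μ := Measure.isProbabilityMeasure_map hUV.aemeasurable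
  haveI : IsProbabilityMeasure μ₁ := Measure.isProbabilityMeasure_map hU.aemeasurable
  haveI : IsProbabilityMeasure μ₂ := Measure.isProbabilityMeasure_map hV.aemeasurable
  have hrm : Measurable r := (Measure.measurable_rnDeriv μ ν).ennreal_toReal
  -- r is integrable and has integral 1
  have hrint : Integrable r ν := by
    refine Integrable.mono' ((hr2.add (integrable_const 1)).div_const 2)
      hrm.aestronglyMeasurable ?_
    filter_upwards with p
    simp only [Pi.add_apply]
    have h0 : 0 ≤ r p := ENNReal.toReal_nonneg
    rw [Real.norm_eq_abs, abs_of_nonneg h0]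
    nlinarith [sq_nonneg (r p - 1)]
  have hrone : ∫ p, r p ∂ν = 1 := by
    rw [hrdef]
    rw [Measure.integral_toReal_rnDeriv hac]
    simp
  -- transfer integrals/integrability to marginals
  have hfint2P : Integrable (fun ω => f (U ω) ^ 2) P := by
    by_contra h
    rw [integral_undef h] at hf1; exact one_ne_zero hf1.symm
  have hgint2P : Integrable (fun ω => g (V ω) ^ 2) P := by
    by_contra h
    rw [integral_undef h] at hg1; exact one_ne_zero hg1.symm
  have hf2m : ∫ u, f u ^ 2 ∂μ₁ = 1 := by
    rw [hμ₁def, integral_map hU.aemeasurable (hf.pow_const 2).aestronglyMeasurable]; exact hf1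
  have hg2m : ∫ u, g u ^ 2 ∂μ₂ = 1 := by
    rw [hμ₂def, integral_map hV.aemeasurable (hg.pow_const 2).aestronglyMeasurable]; exact hg1
  have hf0m : ∫ u, f u ∂μ₁ = 0 := by
    rw [hμ₁def, integral_map hU.aemeasurable hf.aestronglyMeasurable]; exact hf0
  have hg0m : ∫ u, g u ∂μ₂ = 0 := by
    rw [hμ₂def, integral_map hV.aemeasurable hg.aestronglyMeasurable]; exact hg0
  have hfint2 : Integrable (fun u => f u ^ 2) μ₁ := by
    rw [hμ₁def, integrable_map_measure (hf.pow_const 2).aestronglyMeasurable hU.aemeasurable]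
    exact hfint2P
  have hgint2 : Integrable (fun u => g u ^ 2) μ₂ := by
    rw [hμ₂def, integrable_map_measure (hg.pow_const 2).aestronglyMeasurable hV.aemeasurable]
    exact hgint2P
  -- product-space integrabilities
  have hFG2 : Integrable (fun p : ℝ × ℝ => (f p.1 * g p.2) ^ 2) ν := by
    have := hfint2.mul_prod hgint2
    refine this.congr ?_
    filter_upwards with p
    ring
  have hFGm : Measurable fun p : ℝ × ℝ => f p.1 * g p.2 :=
    (hf.comp measurable_fst).mul (hg.comp measurable_snd)
  have hF2 : Integrable (fun p : ℝ × ℝ => f p.1 ^ 2) ν := by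
    have := hfint2.mul_prod (integrable_const (1 : ℝ) (μ := μ₂))
    refine this.congr ?_
    filter_upwards with p
    ring
  have hG2 : Integrable (fun p : ℝ × ℝ => g p.2 ^ 2) ν := by
    have := (integrable_const (1 : ℝ) (μ := μ₁)).mul_prod hgint2
    refine this.congr ?_
    filter_upwards with p
    ring
  have hFG : Integrable (fun p : ℝ × ℝ => f p.1 * g p.2) ν :=
    myL2mul (hf.comp measurable_fst).aestronglyMeasurable
      (hg.comp measurable_snd).aestronglyMeasurable hF2 hG2
  have hr1sq : Integrable (fun p => (r p - 1) ^ 2) ν := by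
    have h : (fun p => (r p - 1) ^ 2) = fun p => (r p ^ 2 - 2 * r p) + 1 := by
      funext p; ring
    rw [h]
    exact (hr2.sub (hrint.const_mul 2)).add (integrable_const 1)
  have hFGr : Integrable (fun p : ℝ × ℝ => f p.1 * g p.2 * (r p - 1)) ν :=
    myL2mul hFGm.aestronglyMeasurable ((hrm.sub measurable_const)).aestronglyMeasurable
      hFG2 hr1sq
  -- the main computation
  have step1 : ∫ ω, f (U ω) * g (V ω) ∂P = ∫ p, f p.1 * g p.2 ∂μ :=
    (integral_map hUV.aemeasurable hFGm.aestronglyMeasurable).symm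
  have step2 : ∫ p, f p.1 * g p.2 ∂μ = ∫ p, r p * (f p.1 * g p.2) ∂ν := by
    rw [← integral_rnDeriv_smul hac (f := fun p : ℝ × ℝ => f p.1 * g p.2)]
    simp [hrdef, smul_eq_mul]
  have step3 : ∫ p, r p * (f p.1 * g p.2) ∂ν
      = ∫ p, f p.1 * g p.2 * (r p - 1) ∂ν + ∫ p, f p.1 * g p.2 ∂ν := by
    rw [← integral_add hFGr hFG]
    congr 1; funext p; ring
  have step4 : ∫ p, f p.1 * g p.2 ∂ν = 0 := by
    rw [hνdef, integral_prod_mul, hf0m, hg0m]; ring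
  have hmain : ∫ ω, f (U ω) * g (V ω) ∂P = ∫ p, f p.1 * g p.2 * (r p - 1) ∂ν := by
    rw [step1, step2, step3, step4, add_zero]
  -- Cauchy-Schwarz
  have hCS := myCS hFG2 hr1sq (myL2mul hFGm.aestronglyMeasurable
    (hrm.sub measurable_const).aestronglyMeasurable hFG2 hr1sq)
  have hFG2val : ∫ p, (f p.1 * g p.2) ^ 2 ∂ν = 1 := by
    have h : (fun p : ℝ × ℝ => (f p.1 * g p.2) ^ 2) = fun p : ℝ × ℝ => f p.1 ^ 2 * g p.2 ^ 2 := by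
      funext p; ring
    rw [h, hνdef, integral_prod_mul (fun u => f u ^ 2) (fun u => g u ^ 2), hf2m, hg2m]; ring
  have hr1val : ∫ p, (r p - 1) ^ 2 ∂ν = (∫ p, r p ^ 2 ∂ν) - 1 := by
    have h : (fun p => (r p - 1) ^ 2) = fun p => (r p ^ 2 - 2 * r p) + 1 := by
      funext p; ring
    have hA : Integrable (fun p => r p ^ 2 - 2 * r p) ν := hr2.sub (hrint.const_mul 2)
    have e1 : ∫ p, (r p ^ 2 - 2 * r p) + 1 ∂ν
        = (∫ p, r p ^ 2 - 2 * r p ∂ν) + ∫ _p, (1 : ℝ) ∂ν := integral_add hA (integrable_const 1)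
    have e2 : ∫ p, r p ^ 2 - 2 * r p ∂ν
        = (∫ p, r p ^ 2 ∂ν) - ∫ p, 2 * r p ∂ν := integral_sub hr2 (hrint.const_mul 2)
    rw [h, e1, e2, integral_const_mul, hrone, integral_const]
    simp
    ring
  rw [hmain]
  calc (∫ p, f p.1 * g p.2 * (r p - 1) ∂ν) ^ 2
      ≤ (∫ p, (f p.1 * g p.2) ^ 2 ∂ν) * ∫ p, (r p - 1) ^ 2 ∂ν := hCS
    _ = (∫ p, r p ^ 2 ∂ν) - 1 := by rw [hFG2val, hr1val, one_mul]

lemma chi_nonneg {Ω : Type*} [MeasurableSpace Ω]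
    (P : Measure Ω) [IsProbabilityMeasure P]
    (U V : Ω → ℝ) (hU : Measurable U) (hV : Measurable V)
    (hac : Measure.map (fun ω => (U ω, V ω)) P ≪
      (Measure.map U P).prod (Measure.map V P))
    (hr2 : Integrable
      (fun p => (((Measure.map (fun ω => (U ω, V ω)) P).rnDeriv
        ((Measure.map U P).prod (Measure.map V P)) p).toReal) ^ 2)
      ((Measure.map U P).prod (Measure.map V P))) :
    0 ≤ (∫ p, (((Measure.map (fun ω => (U ω, V ω)) P).rnDeriv
      ((Measure.map U P).prod (Measure.map V P)) p).toReal) ^ 2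
      ∂((Measure.map U P).prod (Measure.map V P))) - 1 := by
  set μ := Measure.map (fun ω => (U ω, V ω)) P with hμdef
  set μ₁ := Measure.map U P with hμ₁def
  set μ₂ := Measure.map V P with hμ₂def
  set ν := μ₁.prod μ₂ with hνdef
  set r : ℝ × ℝ → ℝ := fun p => (μ.rnDeriv ν p).toReal with hrdef
  have hUV : Measurable fun ω => (U ω, V ω) := hU.prodMk hV
  haveI : IsProbabilityMeasure μ := Measure.isProbabilityMeasure_map hUV.aemeasurable
  haveI : IsProbabilityMeasure μ₁ := Measure.isProbabilityMeasure_map hU.aemeasurable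
  haveI : IsProbabilityMeasure μ₂ := Measure.isProbabilityMeasure_map hV.aemeasurable
  have hrm : Measurable r := (Measure.measurable_rnDeriv μ ν).ennreal_toReal
  have hrint : Integrable r ν := by
    refine Integrable.mono' ((hr2.add (integrable_const 1)).div_const 2)
      hrm.aestronglyMeasurable ?_
    filter_upwards with p
    simp only [Pi.add_apply]
    have h0 : 0 ≤ r p := ENNReal.toReal_nonneg
    rw [Real.norm_eq_abs, abs_of_nonneg h0]
    nlinarith [sq_nonneg (r p - 1)]
  have hrone : ∫ p, r p ∂ν = 1 := by
    rw [hrdef, Measure.integral_toReal_rnDeriv hac]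
    simp
  have hr1val : ∫ p, (r p - 1) ^ 2 ∂ν = (∫ p, r p ^ 2 ∂ν) - 1 := by
    have h : (fun p => (r p - 1) ^ 2) = fun p => (r p ^ 2 - 2 * r p) + 1 := by
      funext p; ring
    have hA : Integrable (fun p => r p ^ 2 - 2 * r p) ν := hr2.sub (hrint.const_mul 2)
    have e1 : ∫ p, (r p ^ 2 - 2 * r p) + 1 ∂ν
        = (∫ p, r p ^ 2 - 2 * r p ∂ν) + ∫ _p, (1 : ℝ) ∂ν := integral_add hA (integrable_const 1)
    have e2 : ∫ p, r p ^ 2 - 2 * r p ∂ν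
        = (∫ p, r p ^ 2 ∂ν) - ∫ p, 2 * r p ∂ν := integral_sub hr2 (hrint.const_mul 2)
    rw [h, e1, e2, integral_const_mul, hrone, integral_const]
    simp
    ring
  have := integral_nonneg (μ := ν) (f := fun p => (r p - 1) ^ 2) fun p => sq_nonneg _
  linarith [hr1val ▸ this]


/-- Let `μ` be the joint law of `(U,V)` and `μ₁, μ₂` the marginal laws,
with `μ ≪ μ₁ ⊗ μ₂` and square-integrable Radon–Nikodym derivative. Then for all
measurable `f, g : ℝ → ℝ` with `E[f(U)] = E[g(V)] = 0` and `E[f(U)²] = E[g(V)²] = 1`,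
`(E[f(U) g(V)])² ≤ χ²(μ, μ₁ ⊗ μ₂)`; in particular `HGR(U,V)² ≤ χ²(P_{U,V}, P_U ⊗ P_V)`,
where `χ²(P,Q) = ∫ (dP/dQ)² dQ − 1`. -/
theorem hgr_sq_le_chiSq {Ω : Type*} [MeasurableSpace Ω]
    (P : Measure Ω) [IsProbabilityMeasure P]
    (U V : Ω → ℝ) (hU : Measurable U) (hV : Measurable V)
    (hac : Measure.map (fun ω => (U ω, V ω)) P ≪
      (Measure.map U P).prod (Measure.map V P))
    (hr2 : Integrable
      (fun p => (((Measure.map (fun ω => (U ω, V ω)) P).rnDeriv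
        ((Measure.map U P).prod (Measure.map V P)) p).toReal) ^ 2)
      ((Measure.map U P).prod (Measure.map V P))) :
    (∀ f g : ℝ → ℝ, Measurable f → Measurable g →
      (∫ ω, f (U ω) ∂P) = 0 → (∫ ω, g (V ω) ∂P) = 0 →
      (∫ ω, (f (U ω)) ^ 2 ∂P) = 1 → (∫ ω, (g (V ω)) ^ 2 ∂P) = 1 →
      (∫ ω, f (U ω) * g (V ω) ∂P) ^ 2 ≤
        (∫ p, (((Measure.map (fun ω => (U ω, V ω)) P).rnDeriv
          ((Measure.map U P).prod (Measure.map V P)) p).toReal) ^ 2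
          ∂((Measure.map U P).prod (Measure.map V P))) - 1) ∧
    (hgr P U V) ^ 2 ≤
      (∫ p, (((Measure.map (fun ω => (U ω, V ω)) P).rnDeriv
        ((Measure.map U P).prod (Measure.map V P)) p).toReal) ^ 2
        ∂((Measure.map U P).prod (Measure.map V P))) - 1 := by
  set χ := (∫ p, (((Measure.map (fun ω => (U ω, V ω)) P).rnDeriv
      ((Measure.map U P).prod (Measure.map V P)) p).toReal) ^ 2
      ∂((Measure.map U P).prod (Measure.map V P))) - 1 with hχdef
  have hkey : ∀ f g : ℝ → ℝ, Measurable f → Measurable g →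
      (∫ ω, f (U ω) ∂P) = 0 → (∫ ω, g (V ω) ∂P) = 0 →
      (∫ ω, (f (U ω)) ^ 2 ∂P) = 1 → (∫ ω, (g (V ω)) ^ 2 ∂P) = 1 →
      (∫ ω, f (U ω) * g (V ω) ∂P) ^ 2 ≤ χ :=
    fun f g hf hg h0 h0' h1 h1' => key_ineq P U V hU hV hac hr2 f g hf hg h0 h0' h1 h1'
  have hχ0 : 0 ≤ χ := chi_nonneg P U V hU hV hac hr2
  refine ⟨hkey, ?_⟩
  rw [hgr]
  set S := { c : ℝ | ∃ f g : ℝ → ℝ, Measurable f ∧ Measurable g ∧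
    (∫ ω, f (U ω) ∂P) = 0 ∧ (∫ ω, g (V ω) ∂P) = 0 ∧
    (∫ ω, (f (U ω)) ^ 2 ∂P) = 1 ∧ (∫ ω, (g (V ω)) ^ 2 ∂P) = 1 ∧
    c = ∫ ω, f (U ω) * g (V ω) ∂P } with hSdef
  have hsq : ∀ c ∈ S, c ^ 2 ≤ χ := by
    rintro c ⟨f, g, hf, hg, h0, h0', h1, h1', rfl⟩
    exact hkey f g hf hg h0 h0' h1 h1'
  have habs : ∀ c ∈ S, |c| ≤ Real.sqrt χ := by
    intro c hc
    have : c ^ 2 ≤ χ := hsq c hc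
    calc |c| = Real.sqrt (c ^ 2) := (Real.sqrt_sq_eq_abs c).symm
      _ ≤ Real.sqrt χ := Real.sqrt_le_sqrt this
  have hub : ∀ c ∈ S, c ≤ Real.sqrt χ := fun c hc => (le_abs_self c).trans (habs c hc)
  have h1 : sSup S ≤ Real.sqrt χ := Real.sSup_le hub (Real.sqrt_nonneg χ)
  rcases Set.eq_empty_or_nonempty S with hS | ⟨c, hc⟩
  · rw [hS, Real.sSup_empty]
    simpa using hχ0
  · have h2 : -Real.sqrt χ ≤ sSup S := by
      have hcl : -Real.sqrt χ ≤ c := by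
        have := habs c hc
        have := neg_abs_le c
        linarith
      exact le_trans hcl (le_csSup ⟨Real.sqrt χ, hub⟩ hc)
    have := sq_le_sq' h2 h1
    rwa [Real.sq_sqrt hχ0] at this
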